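/- The constants k·1 form a W(1)-submodule of A(1) (every derivation of A(1) kills constants), and the quotient module A(1)/k·1 is a simple W(1)-module of dimension p - 1. -/

import Mathlib

set_option synthInstance.maxHeartbeats 1000000
set_option maxHeartbeats 1000000

open Polynomial

/-- The truncated polynomial ring `A(1) = k[X]/(X^p)`. -/
abbrev TruncPoly (k : Type) [Field k] (p : ℕ) : Type :=
  Polynomial k ⧸ Ideal.span {(X : Polynomial k) ^ p}

section Aux

variable {k : Type} [Field k] {p : ℕ} [CharP k p]

private lemma truncDeriv_wd (f g : Polynomial k)
    (h : f - g ∈ Ideal.span {(X : Polynomial k) ^ p}) :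
    Ideal.Quotient.mk (Ideal.span {(X : Polynomial k) ^ p}) (derivative f) =
    Ideal.Quotient.mk (Ideal.span {(X : Polynomial k) ^ p}) (derivative g) := by
  rw [Ideal.Quotient.eq]
  rw [Ideal.mem_span_singleton] at h ⊢
  obtain ⟨q, hq⟩ := h
  have : derivative f - derivative g = derivative (f - g) := by simp
  rw [this, hq, derivative_mul, derivative_X_pow]
  have hp0 : (C ((p : ℕ) : k) : Polynomial k) = 0 := by
    simp [CharP.cast_eq_zero k p]
  rw [hp0]
  simp only [zero_mul, mul_zero, zero_add]
  exact Dvd.intro _ rfl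

private noncomputable def truncDerivFun : TruncPoly k p → TruncPoly k p := fun a =>
  Quotient.liftOn' a
    (fun f => Ideal.Quotient.mk (Ideal.span {(X : Polynomial k) ^ p}) (derivative f))
    (fun f g h => truncDeriv_wd f g ((Submodule.quotientRel_def _).mp h))

private lemma truncDerivFun_mk (f : Polynomial k) :
    truncDerivFun (Ideal.Quotient.mk (Ideal.span {(X : Polynomial k) ^ p}) f) =
      Ideal.Quotient.mk (Ideal.span {(X : Polynomial k) ^ p}) (derivative f) := rfl

private lemma mk_smul (c : k) (f : Polynomial k) :
    c • Ideal.Quotient.mk (Ideal.span {(X : Polynomial k) ^ p}) f =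
      Ideal.Quotient.mk (Ideal.span {(X : Polynomial k) ^ p}) (c • f) := by
  rw [← Ideal.Quotient.mk_eq_mk, ← Ideal.Quotient.mk_eq_mk, ← Submodule.Quotient.mk_smul]

private lemma mk_C_eq (c : k) :
    Ideal.Quotient.mk (Ideal.span {(X : Polynomial k) ^ p}) (C c) = c • (1 : TruncPoly k p) := by
  have h1 : (1 : TruncPoly k p)
      = Ideal.Quotient.mk (Ideal.span {(X : Polynomial k) ^ p}) (1 : Polynomial k) := rfl
  rw [h1, mk_smul]
  congr 1
  simp [smul_eq_C_mul]

noncomputable def truncDeriv : Derivation k (TruncPoly k p) (TruncPoly k p) where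
  toFun := truncDerivFun
  map_add' a b := by
    obtain ⟨f, rfl⟩ := Ideal.Quotient.mk_surjective a
    obtain ⟨g, rfl⟩ := Ideal.Quotient.mk_surjective b
    rw [← map_add, truncDerivFun_mk, truncDerivFun_mk, truncDerivFun_mk, derivative_add, map_add]
  map_smul' c a := by
    obtain ⟨f, rfl⟩ := Ideal.Quotient.mk_surjective a
    show truncDerivFun (c • Ideal.Quotient.mk (Ideal.span {(X : Polynomial k) ^ p}) f)
        = c • truncDerivFun (Ideal.Quotient.mk (Ideal.span {(X : Polynomial k) ^ p}) f)
    rw [mk_smul, truncDerivFun_mk, truncDerivFun_mk, mk_smul, derivative_smul]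
  map_one_eq_zero' := by
    have : (1 : TruncPoly k p) = Ideal.Quotient.mk (Ideal.span {(X : Polynomial k) ^ p}) 1 := rfl
    show truncDerivFun (1 : TruncPoly k p) = 0
    rw [this, truncDerivFun_mk]
    simp
  leibniz' a b := by
    obtain ⟨f, rfl⟩ := Ideal.Quotient.mk_surjective a
    obtain ⟨g, rfl⟩ := Ideal.Quotient.mk_surjective b
    show truncDerivFun (Ideal.Quotient.mk (Ideal.span {(X : Polynomial k) ^ p}) f *
          Ideal.Quotient.mk (Ideal.span {(X : Polynomial k) ^ p}) g)
        = Ideal.Quotient.mk (Ideal.span {(X : Polynomial k) ^ p}) f •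
            truncDerivFun (Ideal.Quotient.mk (Ideal.span {(X : Polynomial k) ^ p}) g) +
          Ideal.Quotient.mk (Ideal.span {(X : Polynomial k) ^ p}) g •
            truncDerivFun (Ideal.Quotient.mk (Ideal.span {(X : Polynomial k) ^ p}) f)
    rw [← map_mul, truncDerivFun_mk, truncDerivFun_mk, truncDerivFun_mk, derivative_mul,
      smul_eq_mul, smul_eq_mul, map_add, map_mul, map_mul]
    ring

lemma truncDeriv_mk (f : Polynomial k) :
    truncDeriv (Ideal.Quotient.mk (Ideal.span {(X : Polynomial k) ^ p}) f) =
      Ideal.Quotient.mk (Ideal.span {(X : Polynomial k) ^ p}) (derivative f) := rfl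

end Aux

theorem constants_submodule_and_simple_quotient (p : ℕ) (k : Type) [Field k] [IsAlgClosed k]
    [CharP k p] (hp : p.Prime) (hp3 : 3 < p) :
    (∀ D : Derivation k (TruncPoly k p) (TruncPoly k p),
      ∀ a ∈ Submodule.span k {(1 : TruncPoly k p)},
        D a ∈ Submodule.span k {(1 : TruncPoly k p)}) ∧
    (∀ N : Submodule k (TruncPoly k p),
      Submodule.span k {(1 : TruncPoly k p)} ≤ N →
      (∀ D : Derivation k (TruncPoly k p) (TruncPoly k p), ∀ a ∈ N, D a ∈ N) →
      N = Submodule.span k {(1 : TruncPoly k p)} ∨ N = ⊤) ∧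
    Module.finrank k (TruncPoly k p ⧸ Submodule.span k {(1 : TruncPoly k p)}) = p - 1 := by
  have hp0 : p ≠ 0 := hp.ne_zero
  set S : Submodule k (TruncPoly k p) := Submodule.span k {(1 : TruncPoly k p)} with hS
  have hmemS : ∀ a : TruncPoly k p, a ∈ S ↔ ∃ c : k, c • (1 : TruncPoly k p) = a := by
    intro a; rw [hS, Submodule.mem_span_singleton]
  -- membership of constants
  have hCS : ∀ c : k, Ideal.Quotient.mk (Ideal.span {(X : Polynomial k) ^ p}) (C c) ∈ S := by
    intro c; rw [hmemS]; exact ⟨c, (mk_C_eq c).symm⟩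
  -- an element of low degree maps into S iff it is constant
  have hlow : ∀ f : Polynomial k, f.natDegree < p → Ideal.Quotient.mk (Ideal.span {(X : Polynomial k) ^ p}) f ∈ S →
      ∃ c : k, f = C c := by
    intro f hdeg hfS
    rw [hmemS] at hfS
    obtain ⟨c, hc⟩ := hfS
    rw [← mk_C_eq] at hc
    rw [Ideal.Quotient.eq, Ideal.mem_span_singleton] at hc
    refine ⟨c, ?_⟩
    by_contra hne
    have hsub : C c - f ≠ 0 := sub_ne_zero.mpr (fun h => hne h.symm)
    have := Polynomial.natDegree_le_of_dvd hc hsub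
    rw [natDegree_X_pow] at this
    have : p ≤ max (C c).natDegree f.natDegree :=
      this.trans (natDegree_sub_le _ _)
    simp only [natDegree_C, max_eq_right (Nat.zero_le _)] at this
    omega
  constructor
  · -- constants are stable
    intro D a ha
    rw [hmemS] at ha
    obtain ⟨c, rfl⟩ := ha
    rw [Derivation.map_smul, Derivation.map_one_eq_zero, smul_zero]
    exact Submodule.zero_mem S
  constructor
  · -- simplicity
    intro N hSN hstab
    by_cases hNS : N = S
    · exact Or.inl hNS
    right
    -- find an element of N not in S
    have hlt : S < N := lt_of_le_of_ne hSN (Ne.symm hNS)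
    obtain ⟨a, haN, haS⟩ := SetLike.exists_of_lt hlt
    -- x := image of X
    set x : TruncPoly k p := Ideal.Quotient.mk (Ideal.span {(X : Polynomial k) ^ p}) X with hx
    -- key claim: x ∈ N
    have key : ∀ n : ℕ, ∀ f : Polynomial k, f.natDegree ≤ n → f.natDegree < p →
        Ideal.Quotient.mk (Ideal.span {(X : Polynomial k) ^ p}) f ∈ N → Ideal.Quotient.mk (Ideal.span {(X : Polynomial k) ^ p}) f ∉ S → x ∈ N := by
      intro n
      induction n with
      | zero =>
        intro f hle _ _ hfS
        exfalso
        obtain ⟨c, rfl⟩ := Polynomial.natDegree_eq_zero.mp (Nat.le_zero.mp hle)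
        exact hfS (hCS c)
      | succ n ih =>
        intro f hle hlt hfN hfS
        have hfd : f.natDegree ≠ 0 := by
          intro h0
          obtain ⟨c, rfl⟩ := Polynomial.natDegree_eq_zero.mp h0
          exact hfS (hCS c)
        have hdN : Ideal.Quotient.mk (Ideal.span {(X : Polynomial k) ^ p}) (derivative f) ∈ N := by
          have := hstab truncDeriv _ hfN
          rwa [truncDeriv_mk] at this
        by_cases hdS : Ideal.Quotient.mk (Ideal.span {(X : Polynomial k) ^ p}) (derivative f) ∈ S
        · -- derivative is a constant: f = a₀ + a₁ X with a₁ ≠ 0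
          have hdlt : (derivative f).natDegree < p :=
            lt_trans (natDegree_derivative_lt hfd) hlt
          obtain ⟨c, hc⟩ := hlow _ hdlt hdS
          -- all coefficients of f in degrees ≥ 2 vanish
          have hcoeff : ∀ m : ℕ, 2 ≤ m → f.coeff m = 0 := by
            intro m hm
            rcases lt_or_ge m p with hmp | hmp
            · obtain ⟨j, rfl⟩ : ∃ j, m = j + 1 := ⟨m - 1, by omega⟩
              have : (derivative f).coeff j = f.coeff (j + 1) * (j + 1 : k) := coeff_derivative f j
              rw [hc, coeff_C, if_neg (by omega : ¬ j = 0)] at this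
              have hj : ((j + 1 : ℕ) : k) ≠ 0 := by
                rw [Ne, CharP.cast_eq_zero_iff k p]
                intro hdvd
                have := Nat.le_of_dvd (by omega) hdvd
                omega
              have hcast : ((j : k) + 1) = ((j + 1 : ℕ) : k) := by push_cast; ring
              rw [hcast] at this
              exact (mul_eq_zero.mp this.symm).resolve_right hj
            · exact coeff_eq_zero_of_natDegree_lt (lt_of_lt_of_le hlt hmp)
          have hfeq : f = C (f.coeff 0) + C (f.coeff 1) * X := by
            ext m
            rcases m with _ | _ | m
            · simp
            · simp only [coeff_add, coeff_C, if_neg one_ne_zero, coeff_C_mul,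
                coeff_X_one, mul_one, zero_add]
            · rw [hcoeff (m + 2) (by omega)]
              simp only [coeff_add, coeff_C, coeff_C_mul, coeff_X]
              rw [if_neg (by omega : ¬ (m + 2 : ℕ) = 0), if_neg (by omega : ¬ (1 : ℕ) = m + 2)]
              simp
          have ha1 : f.coeff 1 ≠ 0 := by
            intro h1
            apply hfS
            rw [hfeq, h1]
            simpa using hCS (f.coeff 0)
          -- x ∈ N
          have hmkf : Ideal.Quotient.mk (Ideal.span {(X : Polynomial k) ^ p}) f = (f.coeff 0) • 1 + (f.coeff 1) • x := by
            conv_lhs => rw [hfeq]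
            rw [map_add, map_mul, mk_C_eq, mk_C_eq, smul_mul_assoc, one_mul]
          have h1N : (f.coeff 0) • (1 : TruncPoly k p) ∈ N := hSN (by rw [hmemS]; exact ⟨_, rfl⟩)
          have : (f.coeff 1) • x ∈ N := by
            have := N.sub_mem hfN h1N
            rwa [hmkf, add_sub_cancel_left] at this
          have := N.smul_mem (f.coeff 1)⁻¹ this
          rwa [smul_smul, inv_mul_cancel₀ ha1, one_smul] at this
        · -- induct on the derivative
          have hdlt' : (derivative f).natDegree ≤ n := by
            have := natDegree_derivative_lt hfd
            omega
          exact ih _ hdlt' (lt_trans (natDegree_derivative_lt hfd) hlt) hdN hdS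
    -- produce a good representative for a
    obtain ⟨f, rfl⟩ := Ideal.Quotient.mk_surjective a
    have hXp1 : (X : Polynomial k) ^ p ≠ 1 := by
      intro h
      have := congrArg natDegree h
      rw [natDegree_X_pow, natDegree_one] at this
      omega
    set g := f %ₘ ((X : Polynomial k) ^ p) with hg
    have hmkg : Ideal.Quotient.mk (Ideal.span {(X : Polynomial k) ^ p}) g = Ideal.Quotient.mk (Ideal.span {(X : Polynomial k) ^ p}) f := by
      rw [Ideal.Quotient.eq, hg, modByMonic_eq_sub_mul_div f ((X : Polynomial k) ^ p),
        Ideal.mem_span_singleton]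
      have h2 : f - (X : Polynomial k) ^ p * (f /ₘ (X : Polynomial k) ^ p) - f
          = -((X : Polynomial k) ^ p * (f /ₘ (X : Polynomial k) ^ p)) := by ring
      rw [h2]
      exact dvd_neg.mpr (Dvd.intro _ rfl)
    have hgd : g.natDegree < p := by
      have := natDegree_modByMonic_lt f (monic_X_pow p) hXp1
      rwa [natDegree_X_pow] at this
    have hxN : x ∈ N := key g.natDegree g le_rfl hgd (by rw [hmkg]; exact haN)
      (by rw [hmkg]; exact haS)
    -- now N = ⊤
    ext b
    simp only [Submodule.mem_top, iff_true]
    obtain ⟨h, rfl⟩ := Ideal.Quotient.mk_surjective b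
    have hD := hstab ((Ideal.Quotient.mk (Ideal.span {(X : Polynomial k) ^ p}) h) • truncDeriv) x hxN
    rw [Derivation.smul_apply, hx, truncDeriv_mk] at hD
    simpa using hD
  · -- finrank
    have hXp : (X : Polynomial k) ^ p ≠ 0 := pow_ne_zero p X_ne_zero
    haveI : Module.Finite k (TruncPoly k p) := (AdjoinRoot.powerBasis hXp).finite
    haveI : Nontrivial (TruncPoly k p) := by
      refine AdjoinRoot.nontrivial _ ?_
      rw [degree_X_pow]
      exact_mod_cast (by omega : (p : ℕ) ≠ 0) ∘ fun h => by exact_mod_cast h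
    have hfr : Module.finrank k (TruncPoly k p) = p := by
      exact (AdjoinRoot.powerBasis hXp).finrank.trans (natDegree_X_pow p)
    have hS1 : Module.finrank k S = 1 := finrank_span_singleton one_ne_zero
    have := Submodule.finrank_quotient_add_finrank S
    rw [hS1, hfr] at this
    omega
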